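/- Let E be a normed space, X a Banach lattice, and T : E → X a positively homogeneous map (T(λx) = λT(x) for λ ≥ 0). The following are equivalent: (i) there exists M ≥ 1 such that for all x₁,…,xₙ ∈ E, ‖ ⋁_{k=1}^n |T x_k| ‖ ≤ M · max_{1≤k≤n} ‖x_k‖; (ii) for every norm-null sequence (x_k) in E, the sequence ( ⋁_{k=1}^m |T x_k| )_{m=1}^∞ is norm bounded in X. -/

import Mathlib

section Helpers

variable {X : Type*} [NormedAddCommGroup X] [Lattice X] [HasSolidNorm X] [IsOrderedAddMonoid X]
  [NormedSpace ℝ X]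

private lemma aux_smul_nonneg {x : X} (hx : 0 ≤ x) {c : ℝ} (hc : 0 ≤ c) : 0 ≤ c • x := by
  have hcl : IsClosed {t : ℝ | 0 ≤ t • x} :=
    isClosed_le continuous_const (continuous_id.smul continuous_const)
  have hdy : ∀ (k m : ℕ), 0 ≤ ((m : ℝ) / 2 ^ k) • x := by
    intro k
    induction k with
    | zero =>
      intro m
      simpa [Nat.cast_smul_eq_nsmul] using nsmul_nonneg hx m
    | succ k ih =>
      intro m
      apply nsmul_two_semiclosed
      have h2 : (2 : ℕ) • (((m : ℝ) / 2 ^ (k + 1)) • x) = ((m : ℝ) / 2 ^ k) • x := by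
        rw [← Nat.cast_smul_eq_nsmul ℝ, smul_smul]
        congr 1
        push_cast
        field_simp
        ring
      rw [h2]
      exact ih m
  have hup : ∀ nn : ℕ, ((⌊c * 2 ^ nn⌋₊ : ℝ) / 2 ^ nn) ≤ c := by
    intro nn
    rw [div_le_iff₀ (by positivity)]
    exact Nat.floor_le (by positivity)
  have hlo : ∀ nn : ℕ, c - (1 / 2 : ℝ) ^ nn ≤ ((⌊c * 2 ^ nn⌋₊ : ℝ) / 2 ^ nn) := by
    intro nn
    have h1 : c * 2 ^ nn < ⌊c * 2 ^ nn⌋₊ + 1 := Nat.lt_floor_add_one _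
    rw [le_div_iff₀ (by positivity)]
    have h2 : (1 / 2 : ℝ) ^ nn * 2 ^ nn = 1 := by
      rw [← mul_pow]; norm_num
    nlinarith [h1, h2]
  have hlim : Filter.Tendsto (fun nn : ℕ => ((⌊c * 2 ^ nn⌋₊ : ℝ) / 2 ^ nn))
      Filter.atTop (nhds c) := by
    have hl : Filter.Tendsto (fun nn : ℕ => c - (1 / 2 : ℝ) ^ nn) Filter.atTop (nhds c) := by
      have := Filter.Tendsto.const_sub c
        (tendsto_pow_atTop_nhds_zero_of_lt_one (by norm_num) (by norm_num : (1/2:ℝ) < 1))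
      simpa using this
    exact tendsto_of_tendsto_of_tendsto_of_le_of_le hl tendsto_const_nhds hlo hup
  exact hcl.mem_of_tendsto hlim (Filter.Eventually.of_forall fun nn => hdy nn _)

private lemma aux_smul_le {a b : X} {c : ℝ} (hc : 0 ≤ c) (h : a ≤ b) : c • a ≤ c • b := by
  have := aux_smul_nonneg (sub_nonneg.2 h) hc
  rw [smul_sub] at this
  exact sub_nonneg.1 this

private lemma aux_smul_sup {c : ℝ} (hc : 0 ≤ c) (a b : X) : c • (a ⊔ b) = c • a ⊔ c • b := by
  rcases hc.eq_or_lt with h | hc'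
  · simp [← h]
  · apply le_antisymm
    · have h1 : a ⊔ b ≤ c⁻¹ • (c • a ⊔ c • b) := by
        apply sup_le
        · have := aux_smul_le (inv_nonneg.2 hc) (le_sup_left : c • a ≤ c • a ⊔ c • b)
          rwa [inv_smul_smul₀ hc'.ne'] at this
        · have := aux_smul_le (inv_nonneg.2 hc) (le_sup_right : c • b ≤ c • a ⊔ c • b)
          rwa [inv_smul_smul₀ hc'.ne'] at this
      have := aux_smul_le hc h1
      rwa [smul_inv_smul₀ hc'.ne'] at this
    · exact sup_le (aux_smul_le hc le_sup_left) (aux_smul_le hc le_sup_right)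

private lemma aux_abs_smul {c : ℝ} (hc : 0 ≤ c) (a : X) : |c • a| = c • |a| := by
  have h1 : |c • a| = (c • a) ⊔ (-(c • a)) := rfl
  have h2 : |a| = a ⊔ (-a) := rfl
  rw [h1, h2, aux_smul_sup hc, smul_neg]

private lemma aux_sup'_smul {ι : Type*} (s : Finset ι) (hs : s.Nonempty) {c : ℝ} (hc : 0 ≤ c)
    (f : ι → X) : c • s.sup' hs f = s.sup' hs fun i => c • f i :=
  Finset.comp_sup'_eq_sup'_comp hs (fun y => c • y) (fun u v => aux_smul_sup hc u v)

private lemma aux_sup_fin {α : Type*} [SemilatticeSup α] (m : ℕ) (f : ℕ → α) :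
    (Finset.univ.sup' Finset.univ_nonempty fun k : Fin (m + 1) => f k) =
      (Finset.range (m + 1)).sup' Finset.nonempty_range_add_one f := by
  apply le_antisymm
  · exact Finset.sup'_le _ _ fun k _ => Finset.le_sup' f (Finset.mem_range.2 k.isLt)
  · exact Finset.sup'_le _ _ fun k hk =>
      Finset.le_sup' (fun j : Fin (m + 1) => f j)
        (Finset.mem_univ (⟨k, Finset.mem_range.1 hk⟩ : Fin (m + 1)))

end Helpers

/-- Let `E` be a normed space, `X` a Banach lattice, and `T : E → X` positively
homogeneous. The following are equivalent:
(i) there is `M ≥ 1` with `‖⋁_{k≤n} |T x_k|‖ ≤ M · max_k ‖x_k‖` for all finite families;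
(ii) for every norm-null sequence `(x_k)` in `E`, the sequence `(⋁_{k≤m} |T x_k|)_m` is
norm bounded in `X`. -/
theorem stmt16 (E X : Type*) [NormedAddCommGroup E] [NormedSpace ℝ E]
    [NormedAddCommGroup X] [Lattice X] [HasSolidNorm X] [IsOrderedAddMonoid X]
    [NormedSpace ℝ X] [CompleteSpace X]
    (T : E → X) (hT : ∀ (c : ℝ), 0 ≤ c → ∀ x, T (c • x) = c • T x) :
    (∃ M : ℝ, 1 ≤ M ∧ ∀ (n : ℕ) (x : Fin (n + 1) → E),
        ‖Finset.univ.sup' Finset.univ_nonempty (fun k => |T (x k)|)‖ ≤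
          M * Finset.univ.sup' Finset.univ_nonempty (fun k => ‖x k‖)) ↔
      (∀ x : ℕ → E, Filter.Tendsto x Filter.atTop (nhds 0) →
        ∃ C : ℝ, ∀ m : ℕ,
          ‖(Finset.range (m + 1)).sup' Finset.nonempty_range_add_one (fun k => |T (x k)|)‖ ≤ C) := by
  constructor
  · rintro ⟨M, hM1, hM⟩ x hx
    obtain ⟨N, hN⟩ := Filter.eventually_atTop.1
      ((NormedAddCommGroup.tendsto_nhds_zero.1 hx) 1 one_pos)
    set C0 : ℝ :=
      max ((Finset.range (N + 1)).sup' Finset.nonempty_range_add_one fun k => ‖x k‖) 1 with hC0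
    refine ⟨M * C0, fun m => ?_⟩
    have h1 := hM m fun k : Fin (m + 1) => x k
    refine le_trans (le_of_eq ?_) (le_trans h1 ?_)
    · exact congrArg norm (aux_sup_fin m fun k => |T (x k)|).symm
    · apply mul_le_mul_of_nonneg_left _ (by linarith)
      apply Finset.sup'_le
      intro k _
      rcases le_or_gt k.val N with hk | hk
      · exact le_trans
          (Finset.le_sup' (fun i => ‖x i‖) (Finset.mem_range.2 (by omega)))
          (le_max_left _ _)
      · exact le_trans (hN k.val hk.le).le (le_max_right _ _)
  · intro h
    by_contra hns
    push_neg at hns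
    have key : ∀ j : ℕ, ∃ (n : ℕ) (w : Fin (n + 1) → E),
        (∀ k, ‖w k‖ ≤ 1 / (j + 1)) ∧
        (j : ℝ) < ‖Finset.univ.sup' Finset.univ_nonempty fun k => |T (w k)|‖ := by
      intro j
      obtain ⟨n, x, hx⟩ := hns (((j : ℝ) + 1) * ((j : ℝ) + 1))
        (by nlinarith [Nat.cast_nonneg (α := ℝ) j])
      set s : ℝ := Finset.univ.sup' Finset.univ_nonempty fun k => ‖x k‖ with hs
      set B : X := Finset.univ.sup' Finset.univ_nonempty fun k => |T (x k)| with hB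
      have hs0 : 0 ≤ s :=
        le_trans (norm_nonneg (x 0)) (Finset.le_sup' (fun k => ‖x k‖) (Finset.mem_univ 0))
      have hT0 : T 0 = 0 := by
        have h0 := hT 0 le_rfl 0
        simpa using h0
      have hspos : 0 < s := by
        rcases hs0.lt_or_eq with h' | h'
        · exact h'
        · exfalso
          have hx0 : ∀ k : Fin (n + 1), x k = 0 := by
            intro k
            have hk : ‖x k‖ ≤ s := Finset.le_sup' (fun i => ‖x i‖) (Finset.mem_univ k)
            rw [← h'] at hk
            exact norm_eq_zero.1 (le_antisymm hk (norm_nonneg _))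
          have hBeq : B = 0 := by
            rw [hB]
            have : (fun k : Fin (n + 1) => |T (x k)|) = fun _ => (0 : X) := by
              funext k; rw [hx0 k, hT0, abs_zero]
            rw [this, Finset.sup'_const]
          rw [hBeq, norm_zero, ← h'] at hx
          simp at hx
      set c : ℝ := 1 / (((j : ℝ) + 1) * s) with hc
      have hcpos : 0 < c := by
        rw [hc]
        apply one_div_pos.2
        positivity
      refine ⟨n, fun k => c • x k, ?_, ?_⟩
      · intro k
        rw [norm_smul, Real.norm_of_nonneg hcpos.le]
        have hk : ‖x k‖ ≤ s := Finset.le_sup' (fun i => ‖x i‖) (Finset.mem_univ k)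
        have hcs : c * s = 1 / ((j : ℝ) + 1) := by
          rw [hc]
          field_simp
        calc c * ‖x k‖ ≤ c * s := by gcongr
          _ = 1 / ((j : ℝ) + 1) := hcs
      · have heq : (Finset.univ.sup' Finset.univ_nonempty
            fun k : Fin (n + 1) => |T (c • x k)|) = c • B := by
          rw [hB, aux_sup'_smul _ _ hcpos.le]
          apply Finset.sup'_congr _ rfl
          intro k _
          rw [hT c hcpos.le, aux_abs_smul hcpos.le]
        rw [heq, norm_smul, Real.norm_of_nonneg hcpos.le]
        have hkey : c * (((j : ℝ) + 1) * ((j : ℝ) + 1) * s) < c * ‖B‖ :=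
          mul_lt_mul_of_pos_left hx hcpos
        have hval : c * (((j : ℝ) + 1) * ((j : ℝ) + 1) * s) = (j : ℝ) + 1 := by
          rw [hc]
          field_simp
        rw [hval] at hkey
        linarith
    choose n w hw1 hw2 using key
    set S : ℕ → ℕ := fun j => ∑ i ∈ Finset.range j, (n i + 1) with hSdef
    have hSsucc : ∀ j, S (j + 1) = S j + (n j + 1) := fun j => Finset.sum_range_succ _ j
    have hSle : ∀ j, j ≤ S j := by
      intro j
      calc j = ∑ _i ∈ Finset.range j, 1 := by simp
        _ ≤ _ := Finset.sum_le_sum fun i _ => Nat.le_add_left 1 (n i)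
    have hSmono : StrictMono S := strictMono_nat_of_lt_succ fun j => by rw [hSsucc]; omega
    set idx : ℕ → ℕ := fun k => Nat.findGreatest (fun j => S j ≤ k) k with hidxdef
    have hS0 : S 0 = 0 := by simp [hSdef]
    have hidx1 : ∀ k, S (idx k) ≤ k := by
      intro k
      exact Nat.findGreatest_spec (P := fun j => S j ≤ k) (Nat.zero_le k)
        (by simpa [hS0] using Nat.zero_le k)
    have hidxge : ∀ J k, S J ≤ k → J ≤ idx k := fun J k hJk =>
      Nat.le_findGreatest (le_trans (hSle J) hJk) hJk
    have hidx2 : ∀ k, k < S (idx k + 1) := by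
      intro k
      by_contra hcon
      push_neg at hcon
      have h1 : idx k + 1 ≤ k := le_trans (hSle _) hcon
      have h2 : idx k + 1 ≤ idx k := Nat.le_findGreatest (P := fun j => S j ≤ k) h1 hcon
      omega
    have hidx_eq : ∀ j r, r < n j + 1 → idx (S j + r) = j := by
      intro j r hr
      have h1 : j ≤ idx (S j + r) := hidxge j _ (Nat.le_add_right _ _)
      have h2 : idx (S j + r) ≤ j := by
        by_contra hcon
        push_neg at hcon
        have h3 : S (j + 1) ≤ S (idx (S j + r)) := hSmono.monotone hcon
        have h4 := hidx1 (S j + r)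
        rw [hSsucc] at h3
        omega
      omega
    have hlt : ∀ k, k - S (idx k) < n (idx k) + 1 := by
      intro k
      have h1 := hidx1 k
      have h2 := hidx2 k
      rw [hSsucc] at h2
      omega
    set z : ℕ → E := fun k => w (idx k) ⟨k - S (idx k), hlt k⟩ with hzdef
    have hz_eq : ∀ (j : ℕ) (r : Fin (n j + 1)), z (S j + r.val) = w j r := by
      intro j r
      have hgen : ∀ (i : ℕ) (hi : i = j) (hh : S j + r.val - S i < n i + 1),
          w i ⟨S j + r.val - S i, hh⟩ = w j r := by
        intro i hi
        subst hi
        intro hh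
        congr 1
        apply Fin.ext
        simp
      exact hgen (idx (S j + r.val)) (hidx_eq j r.val r.isLt) (hlt _)
    have hznull : Filter.Tendsto z Filter.atTop (nhds 0) := by
      rw [NormedAddCommGroup.tendsto_nhds_zero]
      intro ε hε
      obtain ⟨J, hJ⟩ := exists_nat_one_div_lt hε
      rw [Filter.eventually_atTop]
      refine ⟨S J, fun k hk => ?_⟩
      have hJle : J ≤ idx k := hidxge J k hk
      have hb : ‖z k‖ ≤ 1 / ((idx k : ℝ) + 1) := hw1 (idx k) _
      have hmono : (1 : ℝ) / ((idx k : ℝ) + 1) ≤ 1 / ((J : ℝ) + 1) := by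
        apply one_div_le_one_div_of_le (by positivity)
        have : (J : ℝ) ≤ (idx k : ℝ) := by exact_mod_cast hJle
        linarith
      calc ‖z k‖ ≤ 1 / ((idx k : ℝ) + 1) := hb
        _ ≤ 1 / ((J : ℝ) + 1) := hmono
        _ < ε := hJ
    obtain ⟨C, hC⟩ := h z hznull
    obtain ⟨j, hj⟩ := exists_nat_gt C
    have hS1 : 1 ≤ S (j + 1) := le_trans (by omega) (hSle (j + 1))
    have hCm := hC (S (j + 1) - 1)
    set B := (Finset.range (S (j + 1) - 1 + 1)).sup' Finset.nonempty_range_add_one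
      fun k => |T (z k)| with hBdef
    set A := Finset.univ.sup' Finset.univ_nonempty fun k : Fin (n j + 1) => |T (w j k)| with hAdef
    have hblock : A ≤ B := by
      rw [hAdef]
      apply Finset.sup'_le
      intro k _
      have hk : S j + k.val ∈ Finset.range (S (j + 1) - 1 + 1) := by
        rw [Finset.mem_range]
        have h1 := hSsucc j
        have h2 := k.isLt
        omega
      calc |T (w j k)| = |T (z (S j + k.val))| := by rw [hz_eq j k]
        _ ≤ B := Finset.le_sup' (fun i => |T (z i)|) hk
    have hA0 : 0 ≤ A :=
      le_trans (abs_nonneg _) (Finset.le_sup' (fun k : Fin (n j + 1) => |T (w j k)|)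
        (Finset.mem_univ 0))
    have hnorm : ‖A‖ ≤ ‖B‖ := by
      apply HasSolidNorm.solid
      rw [abs_of_nonneg hA0, abs_of_nonneg (le_trans hA0 hblock)]
      exact hblock
    have hA := hw2 j
    rw [← hAdef] at hA
    have : (j : ℝ) < C := lt_of_lt_of_le (lt_of_lt_of_le hA hnorm) hCm
    linarith
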